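/- Let ξ be a transcendental real number and suppose λ̂₂(ξ) > 1/2. Then λ₂(ξ) ≤ 1. Here λ₂(ξ) (resp. λ̂₂(ξ)) is the supremum of λ such that the system 0 < |x₀| ≤ X, |x₀ξ − x₁| ≤ X^{−λ}, |x₀ξ² − x₂| ≤ X^{−λ} has an integer solution for arbitrarily large X (resp. for all sufficiently large X). -/

import Mathlib

open Real

lemma int_zero_of_abs_lt {D : ℤ} (h : |(D : ℝ)| < 1) : D = 0 := by
  have h' : |D| < 1 := by exact_mod_cast (by push_cast; exact h : ((|D| : ℤ) : ℝ) < 1)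
  rcases abs_lt.mp h' with ⟨h1, h2⟩
  omega

lemma le_rpow_of_rpow_inv_le {C X e : ℝ} (hC : 0 ≤ C) (he : 0 < e) (h : C ^ e⁻¹ ≤ X) :
    C ≤ X ^ e := by
  calc C = (C ^ e⁻¹) ^ e := (rpow_inv_rpow hC he.ne').symm
    _ ≤ X ^ e := rpow_le_rpow (rpow_nonneg hC _) h he.le

lemma rpow_neg_le_inv {C X e : ℝ} (hC : 0 < C) (he : 0 < e) (hX : 0 < X)
    (h : C ^ e⁻¹ ≤ X) : X ^ (-e) ≤ C⁻¹ := by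
  rw [rpow_neg hX.le]
  exact inv_anti₀ hC (le_rpow_of_rpow_inv_le hC.le he h)

lemma rpow_neg_lt_inv {C X e : ℝ} (hC : 0 < C) (he : 0 < e) (hX : 0 < X)
    (h : C ^ e⁻¹ < X) : X ^ (-e) < C⁻¹ := by
  rw [rpow_neg hX.le]
  have h2 : C < X ^ e := by
    calc C = (C ^ e⁻¹) ^ e := (rpow_inv_rpow hC.le he.ne').symm
      _ < X ^ e := rpow_lt_rpow (rpow_nonneg hC.le _) h he
  exact inv_strictAnti₀ hC h2

lemma hankel_param {x₀ x₁ x₂ : ℤ} (h0 : x₀ ≠ 0) (h : x₁ ^ 2 = x₀ * x₂) :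
    ∃ q p s : ℤ, 1 ≤ q ∧ IsCoprime q p ∧ s ≠ 0 ∧
      x₀ = q ^ 2 * s ∧ x₁ = q * p * s ∧ x₂ = p ^ 2 * s := by
  have hgpos : 0 < Int.gcd x₀ x₁ := Int.gcd_pos_iff.mpr (Or.inl h0)
  set g : ℤ := (Int.gcd x₀ x₁ : ℤ) with hgdef
  have hg0 : g ≠ 0 := by
    simp only [hgdef, ne_eq, Int.natCast_eq_zero]; omega
  obtain ⟨u, hu⟩ : g ∣ x₀ := Int.gcd_dvd_left x₀ x₁
  obtain ⟨v, hv⟩ : g ∣ x₁ := Int.gcd_dvd_right x₀ x₁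
  have hu0 : u ≠ 0 := by rintro rfl; simp at hu; exact h0 hu
  have hudiv : x₀ / g = u := by rw [hu]; exact Int.mul_ediv_cancel_left u hg0
  have hvdiv : x₁ / g = v := by rw [hv]; exact Int.mul_ediv_cancel_left v hg0
  have hcop : IsCoprime u v := by
    rw [Int.isCoprime_iff_gcd_eq_one, ← hudiv, ← hvdiv]
    exact Int.gcd_div_gcd_div_gcd hgpos
  have hkey : g * v ^ 2 = u * x₂ := by
    have h' := h
    rw [hu, hv] at h'
    have h2 : g * (g * v ^ 2) = g * (u * x₂) := by ring_nf; ring_nf at h'; linarith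
    exact mul_left_cancel₀ hg0 h2
  have hudvd : u ∣ g := by
    have : u ∣ g * v ^ 2 := ⟨x₂, by rw [hkey]⟩
    exact (hcop.pow_right (n := 2)).dvd_of_dvd_mul_right this
  obtain ⟨s, hs⟩ := hudvd
  have hs0 : s ≠ 0 := by rintro rfl; simp at hs; exact hg0 hs
  have hx₀ : x₀ = u ^ 2 * s := by rw [hu, hs]; ring
  have hx₁ : x₁ = u * v * s := by rw [hv, hs]; ring
  have hx₂ : x₂ = v ^ 2 * s := by
    have h2 : u * (s * v ^ 2) = u * x₂ := by rw [← hkey, hs]; ring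
    have := mul_left_cancel₀ hu0 h2
    rw [← this]; ring
  rcases le_or_gt 1 u with hu1 | hu1
  · exact ⟨u, v, s, hu1, hcop, hs0, hx₀, hx₁, hx₂⟩
  · refine ⟨-u, -v, s, by omega, hcop.neg_left.neg_right, hs0, by rw [hx₀]; ring,
      by rw [hx₁]; ring, by rw [hx₂]; ring⟩

lemma forced_sq_dvd {q p y₀ y₁ y₂ : ℤ} (hq : 1 ≤ q) (hcop : IsCoprime q p)
    (h1 : q * y₁ - p * y₀ = 0) (h2 : p * y₁ - q * y₂ = 0) : q ^ 2 ∣ y₀ := by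
  have hq0 : q ≠ 0 := by omega
  have hd1 : q ∣ p * y₀ := ⟨y₁, by linarith⟩
  obtain ⟨z, hz⟩ := hcop.dvd_of_dvd_mul_left hd1
  have hy₁ : y₁ = p * z := by
    have : q * y₁ = q * (p * z) := by rw [← mul_left_comm, ← hz]; linarith
    exact mul_left_cancel₀ hq0 this
  have hd2 : q ∣ p ^ 2 * z := ⟨y₂, by rw [hy₁] at h2; nlinarith [h2]⟩
  obtain ⟨w, hw⟩ := (hcop.pow_right (n := 2)).dvd_of_dvd_mul_left hd2
  exact ⟨w, by rw [hz, hw]; ring⟩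

/-- The system `0 < |x₀| ≤ X`, `|x₀ξ - x₁| ≤ X^(-l)`, `|x₀ξ² - x₂| ≤ X^(-l)` has an
integer solution. -/
def SimulSol (ξ X l : ℝ) : Prop :=
  ∃ x₀ x₁ x₂ : ℤ, x₀ ≠ 0 ∧ (|x₀| : ℝ) ≤ X ∧
    |(x₀ : ℝ) * ξ - x₁| ≤ X ^ (-l) ∧ |(x₀ : ℝ) * ξ ^ 2 - x₂| ≤ X ^ (-l)

set_option maxHeartbeats 2000000 in
/-- If `ξ` is transcendental and `λ̂₂(ξ) > 1/2` (some exponent `l > 1/2` is uniformly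
attained), then `λ₂(ξ) ≤ 1` (no exponent `l > 1` is attained for arbitrarily large `X`). -/
theorem lambda_two_le_one_of_uniform (ξ : ℝ) (hξ : Transcendental ℚ ξ)
    (h : ∃ l : ℝ, 1 / 2 < l ∧ ∃ X₀ : ℝ, ∀ X : ℝ, X₀ ≤ X → SimulSol ξ X l) :
    ∀ l : ℝ, 1 < l → ¬ (∀ X₀ : ℝ, ∃ X : ℝ, X₀ ≤ X ∧ SimulSol ξ X l) := by
  obtain ⟨m, hm, X₀, hunif⟩ := h
  intro l hl hsol
  have hirr : Irrational ξ := hξ.irrational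
  have hm0 : (0:ℝ) < m := by linarith
  have hl0 : (0:ℝ) < l := by linarith
  set c : ℝ := |ξ| with hc
  have hc0 : 0 ≤ c := abs_nonneg ξ
  set θ : ℝ := 1 / (2 * m) + 1 with hθdef
  have hθ1 : 1 < θ := by
    have : 0 < 1 / (2 * m) := by positivity
    simp only [hθdef]; linarith
  have hθ2 : θ < 2 := by
    have : 1 / (2 * m) < 1 := by rw [div_lt_one (by linarith)]; linarith
    simp only [hθdef]; linarith
  have hθm : θ * m = m + 1 / 2 := by
    rw [hθdef, add_mul, one_mul, one_div, mul_inv, mul_assoc, inv_mul_cancel₀ hm0.ne', mul_one]; ring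
  -- constants
  set A1 : ℝ := (2 * (c + 2)) ^ (m - 1 / 2)⁻¹ with hA1def
  set A2 : ℝ := (3 * (c + 1)) ^ (2 * l - θ)⁻¹ with hA2def
  have hA1n : 0 ≤ A1 := rpow_nonneg (by linarith) _
  have hA2n : 0 ≤ A2 := rpow_nonneg (by linarith) _
  set Q : ℝ := max X₀ (3 + A1 + A2) with hQdef
  set Qn : ℤ := ⌈Q⌉ with hQndef
  have hQ3 : 3 ≤ Q := le_trans (by linarith) (le_max_right _ _)
  have hQceil : Q ≤ (Qn : ℝ) := Int.le_ceil Q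
  have hQn1 : 1 ≤ Qn := by exact_mod_cast le_trans (by linarith : (1:ℝ) ≤ Q) hQceil
  set S : Finset ℤ := Finset.Icc 1 Qn with hSdef
  have hSne : S.Nonempty := by rw [hSdef, Finset.nonempty_Icc]; exact hQn1
  set δ₀ : ℝ := S.inf' hSne (fun n => |(n : ℝ) * ξ - round ((n : ℝ) * ξ)|) with hδ₀def
  have hδ₀pos : 0 < δ₀ := by
    rw [hδ₀def, Finset.lt_inf'_iff]
    intro n hn
    rw [abs_pos, sub_ne_zero]
    intro heq
    have hn0 : n ≠ 0 := by rw [hSdef, Finset.mem_Icc] at hn; omega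
    exact (hirr.intCast_mul hn0).ne_int _ heq
  -- choose X
  set A0 : ℝ := (2 * (2 * c + 1)) ^ (l - 1)⁻¹ with hA0def
  have hA0n : 0 ≤ A0 := rpow_nonneg (by linarith) _
  set B0 : ℝ := δ₀⁻¹ ^ l⁻¹ with hB0def
  have hB0n : 0 ≤ B0 := rpow_nonneg (by positivity) _
  obtain ⟨X, hXreq, x₀, x₁, x₂, hx00, hx0X, he1, he2⟩ := hsol (3 + A0 + B0)
  have hX3 : (3:ℝ) ≤ X := by linarith
  have hX0 : (0:ℝ) < X := by linarith
  have hX1 : (1:ℝ) ≤ X := by linarith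
  set E : ℝ := X ^ (-l) with hEdef
  have hE0 : 0 ≤ E := rpow_nonneg hX0.le _
  have hE1 : E ≤ 1 := rpow_le_one_of_one_le_of_nonpos hX1 (by linarith)
  have hEthird : E ≤ 1 / 3 := by
    have h1 : E ≤ X ^ (-1 : ℝ) := rpow_le_rpow_of_exponent_le hX1 (by linarith)
    have h2 : X ^ (-1 : ℝ) = X⁻¹ := rpow_neg_one X
    have h3 : X⁻¹ ≤ 1 / 3 := by rw [inv_le_comm₀ hX0 (by norm_num)]; linarith
    rw [h2] at h1; linarith only [h1, h3]
  have hXE : X * E ≤ (2 * (2 * c + 1))⁻¹ := by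
    have key : X ^ (-(l - 1)) ≤ (2 * (2 * c + 1))⁻¹ :=
      rpow_neg_le_inv (by linarith) (by linarith) hX0 (by rw [← hA0def]; linarith)
    calc X * E = X ^ (1:ℝ) * X ^ (-l) := by rw [rpow_one, hEdef]
      _ = X ^ (1 + -l) := (rpow_add hX0 _ _).symm
      _ = X ^ (-(l - 1)) := by ring_nf
      _ ≤ _ := key
  -- Hankel determinant vanishes
  have hD0 : x₁ ^ 2 = x₀ * x₂ := by
    set D : ℤ := x₁ ^ 2 - x₀ * x₂ with hDdef
    set e₁ : ℝ := (x₀ : ℝ) * ξ - x₁ with he₁def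
    set e₂ : ℝ := (x₀ : ℝ) * ξ ^ 2 - x₂ with he₂def
    have hDid : (D : ℝ) = -2 * (x₀ : ℝ) * ξ * e₁ + e₁ ^ 2 + (x₀ : ℝ) * e₂ := by
      push_cast [hDdef, he₁def, he₂def]; ring
    have hb : |(D : ℝ)| ≤ 2 * c * (X * E) + E * E + X * E := by
      rw [hDid]
      have h3 := abs_add_three (-2 * (x₀:ℝ) * ξ * e₁) (e₁ ^ 2) ((x₀:ℝ) * e₂)
      have t1 : |(-2 * (x₀:ℝ) * ξ * e₁)| ≤ 2 * c * (X * E) := by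
        rw [show (-2 * (x₀:ℝ) * ξ * e₁) = -(2 * ((x₀:ℝ) * (ξ * e₁))) by ring, abs_neg,
          abs_mul, abs_mul, abs_mul, abs_two]
        have h₁ : |ξ| * |e₁| ≤ c * E := by
          rw [← hc]
          exact mul_le_mul_of_nonneg_left he1 hc0
        have h₂ : |(x₀:ℝ)| * (|ξ| * |e₁|) ≤ X * (c * E) :=
          mul_le_mul hx0X h₁ (by positivity) (le_trans (abs_nonneg _) hx0X)
        have h₃ : X * (c * E) = c * (X * E) := by ring
        linarith only [h₂, h₃]
      have t2 : |e₁ ^ 2| ≤ E * E := by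
        rw [abs_pow, sq]
        exact mul_le_mul he1 he1 (abs_nonneg _) hE0
      have t3 : |(x₀:ℝ) * e₂| ≤ X * E := by
        rw [abs_mul]
        exact mul_le_mul hx0X he2 (abs_nonneg _) (le_trans (abs_nonneg _) hx0X)
      linarith only [h3, t1, t2, t3]
    have hlt : |(D : ℝ)| < 1 := by
      have h2 : (2 * c + 1) * (X * E) ≤ (2 * c + 1) * (2 * (2 * c + 1))⁻¹ :=
        mul_le_mul_of_nonneg_left hXE (by linarith)
      have h3 : (2 * c + 1) * (2 * (2 * c + 1))⁻¹ = 1 / 2 := by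
        have hne : (2 * c + 1) ≠ 0 := by positivity
        field_simp
      have h4 : E * E ≤ 1 * (1/3) := mul_le_mul hE1 hEthird hE0 (by norm_num)
      have h5 : (2 * c + 1) * (X * E) = 2 * c * (X * E) + X * E := by ring
      linarith only [hb, h2, h3, h4, h5]
    have := int_zero_of_abs_lt hlt
    rw [hDdef] at this; omega
  obtain ⟨q, p, s, hq1, hcop, hs0, hx₀eq, hx₁eq, hx₂eq⟩ := hankel_param hx00 hD0
  have hq0r : (0:ℝ) < (q:ℝ) := by exact_mod_cast (by omega : (0:ℤ) < q)
  have hq1r : (1:ℝ) ≤ (q:ℝ) := by exact_mod_cast hq1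
  -- q² ≤ X
  have hqsqX : (q:ℝ) ^ 2 ≤ X := by
    have h1 : q ^ 2 ≤ |x₀| := by
      rw [hx₀eq, abs_mul, abs_pow, abs_of_nonneg (by omega : (0:ℤ) ≤ q)]
      have h2 : (1:ℤ) ≤ |s| := by
        have := abs_pos.mpr hs0; omega
      exact le_mul_of_one_le_right (by positivity) h2
    calc (q:ℝ) ^ 2 = ((q ^ 2 : ℤ) : ℝ) := by push_cast; ring
      _ ≤ ((|x₀| : ℤ) : ℝ) := by exact_mod_cast h1
      _ ≤ X := by
          have : ((|x₀| : ℤ) : ℝ) = |(x₀:ℝ)| := by push_cast; ring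
          rw [this]; exact hx0X
  set δ : ℝ := |(q:ℝ) * ξ - p| with hδdef
  have hδ0 : 0 ≤ δ := abs_nonneg _
  have hδE : δ ≤ E := by
    have hid : (x₀ : ℝ) * ξ - x₁ = (q:ℝ) * (s:ℝ) * ((q:ℝ) * ξ - p) := by
      rw [hx₀eq, hx₁eq]; push_cast; ring
    have h1 : |(x₀ : ℝ) * ξ - x₁| = |(q:ℝ) * (s:ℝ)| * δ := by
      rw [hid, abs_mul, hδdef]
    have h2 : (1:ℝ) ≤ |(q:ℝ) * (s:ℝ)| := by
      have h2' : (1:ℤ) ≤ |q * s| := by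
        have := abs_pos.mpr (mul_ne_zero (by omega : q ≠ 0) hs0); omega
      calc (1:ℝ) = ((1:ℤ):ℝ) := by norm_num
        _ ≤ ((|q * s| : ℤ) : ℝ) := by exact_mod_cast h2'
        _ = |(q:ℝ) * (s:ℝ)| := by push_cast; ring_nf
    have h3 : δ ≤ |(q:ℝ) * (s:ℝ)| * δ := le_mul_of_one_le_left hδ0 h2
    rw [h1] at he1
    linarith only [h3, he1]
  -- δ < δ₀, hence q > Qn
  have hδδ₀ : δ < δ₀ := by
    have hEδ₀ : E < δ₀ := by
      have key : X ^ (-l) < (δ₀⁻¹)⁻¹ :=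
        rpow_neg_lt_inv (by positivity) hl0 hX0 (by rw [← hB0def]; linarith)
      rw [inv_inv] at key; rw [hEdef]; exact key
    linarith only [hδE, hEδ₀]
  have hqQn : Qn < q := by
    by_contra hle
    push_neg at hle
    have hqS : q ∈ S := by rw [hSdef, Finset.mem_Icc]; exact ⟨hq1, hle⟩
    have h1 : δ₀ ≤ |(q:ℝ) * ξ - round ((q:ℝ) * ξ)| := Finset.inf'_le _ hqS
    have h2 : |(q:ℝ) * ξ - round ((q:ℝ) * ξ)| ≤ δ := round_le ((q:ℝ) * ξ) p
    linarith only [h1, h2, hδδ₀]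
  have hqQ : Q < (q:ℝ) := by
    have : (Qn:ℝ) + 1 ≤ (q:ℝ) := by exact_mod_cast (by omega : Qn + 1 ≤ q)
    linarith only [this, hQceil]
  have hmaxQ : 3 + A1 + A2 ≤ Q := le_max_right _ _
  have hqA1 : A1 ≤ (q:ℝ) := by linarith only [hqQ, hmaxQ, hA2n]
  have hqA2 : A2 ≤ (q:ℝ) := by linarith only [hqQ, hmaxQ, hA1n]
  have hq3 : (3:ℝ) < (q:ℝ) := by linarith only [hqQ, hmaxQ, hA1n, hA2n]
  -- δ ≤ q^(-2l)
  have hδq : δ ≤ (q:ℝ) ^ (-(2 * l)) := by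
    have h1 : X ^ (-l) ≤ ((q:ℝ) ^ (2:ℝ)) ^ (-l) := by
      apply rpow_le_rpow_of_nonpos (by positivity) _ (by linarith)
      rw [show ((q:ℝ) ^ (2:ℝ)) = (q:ℝ) ^ (2:ℕ) by rw [← rpow_natCast (q:ℝ) 2]; norm_num]
      exact_mod_cast hqsqX
    have h2 : ((q:ℝ) ^ (2:ℝ)) ^ (-l) = (q:ℝ) ^ (-(2 * l)) := by
      rw [← rpow_mul hq0r.le]; ring_nf
    rw [h2] at h1
    rw [hEdef] at hδE
    linarith only [h1, hδE]
  -- the uniform solution at X' = q^θ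
  set X' : ℝ := (q:ℝ) ^ θ with hX'def
  have hX'pos : 0 < X' := rpow_pos_of_pos hq0r _
  have hX'X₀ : X₀ ≤ X' := by
    have h1 : (q:ℝ) ^ (1:ℝ) ≤ X' := rpow_le_rpow_of_exponent_le hq1r hθ1.le
    rw [rpow_one] at h1
    have h2 : X₀ ≤ Q := le_max_left _ _
    linarith only [h1, h2, hqQ]
  obtain ⟨y₀, y₁, y₂, hy00, hy0X, hf1, hf2⟩ := hunif X' hX'X₀
  set F : ℝ := X' ^ (-m) with hFdef
  have hF0 : 0 ≤ F := rpow_nonneg hX'pos.le _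
  -- key bound 1 : q * F ≤ (2(c+2))⁻¹
  have hkey1 : (q:ℝ) * F ≤ (2 * (c + 2))⁻¹ := by
    have heq : (q:ℝ) * F = (q:ℝ) ^ (-(m - 1/2)) := by
      rw [hFdef, hX'def, ← rpow_mul hq0r.le]
      rw [show (q:ℝ) * (q:ℝ) ^ (θ * -m) = (q:ℝ) ^ (1:ℝ) * (q:ℝ) ^ (θ * -m) by rw [rpow_one]]
      rw [← rpow_add hq0r]
      congr 1
      have h' : θ * -m = -(θ * m) := by ring
      rw [h', hθm]; ring
    rw [heq]
    exact rpow_neg_le_inv (by linarith) (by linarith) hq0r (by rw [← hA1def]; linarith)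
  -- key bound 2 : X' * δ ≤ (3(c+1))⁻¹
  have hkey2 : X' * δ ≤ (3 * (c + 1))⁻¹ := by
    have h1 : X' * δ ≤ X' * (q:ℝ) ^ (-(2 * l)) := mul_le_mul_of_nonneg_left hδq hX'pos.le
    have h2 : X' * (q:ℝ) ^ (-(2 * l)) = (q:ℝ) ^ (-(2 * l - θ)) := by
      rw [hX'def, ← rpow_add hq0r]; ring_nf
    have h3 : (q:ℝ) ^ (-(2 * l - θ)) ≤ (3 * (c + 1))⁻¹ :=
      rpow_neg_le_inv (by linarith) (by linarith only [hθ2, hl]) hq0r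
        (by rw [← hA2def]; linarith)
    rw [h2] at h1
    linarith only [h1, h3]
  have hi1 : (2 * (c+2))⁻¹ ≤ 1/2 := by
    rw [inv_le_comm₀ (by linarith) (by norm_num)]; linarith
  have hi2 : (3 * (c+1))⁻¹ ≤ 1/3 := by
    rw [inv_le_comm₀ (by linarith) (by norm_num)]; linarith
  -- |p| is not too big
  have hpabs : |(p:ℝ)| ≤ (q:ℝ) * (c + 1) := by
    have h1 : |(p:ℝ)| ≤ |(q:ℝ) * ξ| + δ := by
      calc |(p:ℝ)| = |(q:ℝ) * ξ - ((q:ℝ) * ξ - p)| := by congr 1; ring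
        _ ≤ |(q:ℝ) * ξ| + |(q:ℝ) * ξ - p| := abs_sub _ _
    have h2 : |(q:ℝ) * ξ| = (q:ℝ) * c := by
      rw [abs_mul, abs_of_pos hq0r, hc]
    have h3 : δ ≤ 1 := le_trans hδE hE1
    have h4 : (q:ℝ) * (c + 1) = (q:ℝ) * c + (q:ℝ) := by ring
    linarith only [h1, h2, h3, h4, hq1r]
  -- the two integer linear forms vanish
  have hG1 : q * y₁ - p * y₀ = 0 := by
    apply int_zero_of_abs_lt
    have hid : ((q * y₁ - p * y₀ : ℤ) : ℝ) =
        -(q:ℝ) * ((y₀:ℝ) * ξ - y₁) + (y₀:ℝ) * ((q:ℝ) * ξ - p) := by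
      push_cast; ring
    rw [hid]
    have t1 : |(-(q:ℝ)) * ((y₀:ℝ) * ξ - y₁)| ≤ (q:ℝ) * F := by
      rw [abs_mul, abs_neg, abs_of_pos hq0r]
      exact mul_le_mul_of_nonneg_left hf1 hq0r.le
    have t2 : |(y₀:ℝ) * ((q:ℝ) * ξ - p)| ≤ X' * δ := by
      rw [abs_mul, ← hδdef]
      exact mul_le_mul hy0X (le_refl _) hδ0 (le_trans (abs_nonneg _) hy0X)
    have h5 := abs_add_le ((-(q:ℝ)) * ((y₀:ℝ) * ξ - y₁)) ((y₀:ℝ) * ((q:ℝ) * ξ - p))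
    have h6 : (q:ℝ) * F ≤ 1/2 := le_trans hkey1 hi1
    have h7 : X' * δ ≤ 1/3 := le_trans hkey2 hi2
    calc |(-(q:ℝ)) * ((y₀:ℝ) * ξ - y₁) + (y₀:ℝ) * ((q:ℝ) * ξ - p)|
        ≤ |(-(q:ℝ)) * ((y₀:ℝ) * ξ - y₁)| + |(y₀:ℝ) * ((q:ℝ) * ξ - p)| := h5
      _ < 1 := by linarith only [t1, t2, h6, h7]
  have hG2 : p * y₁ - q * y₂ = 0 := by
    apply int_zero_of_abs_lt
    have hid : ((p * y₁ - q * y₂ : ℤ) : ℝ) =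
        (-(p:ℝ)) * ((y₀:ℝ) * ξ - y₁) + (q:ℝ) * ((y₀:ℝ) * ξ ^ 2 - y₂) +
          (-(y₀:ℝ) * ξ) * ((q:ℝ) * ξ - p) := by
      push_cast; ring
    rw [hid]
    have t1 : |(-(p:ℝ)) * ((y₀:ℝ) * ξ - y₁)| ≤ ((q:ℝ) * (c + 1)) * F := by
      rw [abs_mul, abs_neg]
      exact mul_le_mul hpabs hf1 (abs_nonneg _) (by positivity)
    have t2 : |(q:ℝ) * ((y₀:ℝ) * ξ ^ 2 - y₂)| ≤ (q:ℝ) * F := by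
      rw [abs_mul, abs_of_pos hq0r]
      exact mul_le_mul_of_nonneg_left hf2 hq0r.le
    have t3 : |(-(y₀:ℝ) * ξ) * ((q:ℝ) * ξ - p)| ≤ (X' * c) * δ := by
      rw [abs_mul, abs_mul, abs_neg, ← hδdef, ← hc]
      exact mul_le_mul (mul_le_mul hy0X (le_refl _) hc0 (le_trans (abs_nonneg _) hy0X))
        (le_refl _) hδ0 (by positivity)
    have h5 := abs_add_three ((-(p:ℝ)) * ((y₀:ℝ) * ξ - y₁))
      ((q:ℝ) * ((y₀:ℝ) * ξ ^ 2 - y₂)) ((-(y₀:ℝ) * ξ) * ((q:ℝ) * ξ - p))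
    have hXδ0 : 0 ≤ X' * δ := mul_nonneg hX'pos.le hδ0
    have s1 : (c + 2) * ((q:ℝ) * F) ≤ 1/2 := by
      calc (c + 2) * ((q:ℝ) * F) ≤ (c + 2) * (2 * (c + 2))⁻¹ :=
            mul_le_mul_of_nonneg_left hkey1 (by linarith only [hc0])
        _ = 1/2 := by
            have hne : (c + 2) ≠ 0 := by positivity
            field_simp
    have s2 : c * (X' * δ) ≤ 1/3 := by
      calc c * (X' * δ) ≤ (c + 1) * (X' * δ) :=
            mul_le_mul_of_nonneg_right (by linarith only []) hXδ0
        _ ≤ (c + 1) * (3 * (c + 1))⁻¹ :=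
            mul_le_mul_of_nonneg_left hkey2 (by linarith only [hc0])
        _ = 1/3 := by
            have hne : (c + 1) ≠ 0 := by positivity
            field_simp
    calc |(-(p:ℝ)) * ((y₀:ℝ) * ξ - y₁) + (q:ℝ) * ((y₀:ℝ) * ξ ^ 2 - y₂) +
          (-(y₀:ℝ) * ξ) * ((q:ℝ) * ξ - p)|
        ≤ |(-(p:ℝ)) * ((y₀:ℝ) * ξ - y₁)| + |(q:ℝ) * ((y₀:ℝ) * ξ ^ 2 - y₂)| +
          |(-(y₀:ℝ) * ξ) * ((q:ℝ) * ξ - p)| := h5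
      _ ≤ ((q:ℝ) * (c + 1)) * F + (q:ℝ) * F + (X' * c) * δ :=
          add_le_add (add_le_add t1 t2) t3
      _ = (c + 2) * ((q:ℝ) * F) + c * (X' * δ) := by ring
      _ < 1 := by linarith only [s1, s2]
  -- endgame: q² divides y₀, contradiction with |y₀| ≤ X' < q²
  have hdvd : q ^ 2 ∣ y₀ := forced_sq_dvd hq1 hcop hG1 hG2
  have hylb : (q:ℝ) ^ 2 ≤ |(y₀:ℝ)| := by
    have h1 : q ^ 2 ≤ |y₀| := Int.le_of_dvd (abs_pos.mpr hy00) ((dvd_abs _ _).mpr hdvd)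
    calc (q:ℝ) ^ 2 = ((q ^ 2 : ℤ) : ℝ) := by push_cast; ring
      _ ≤ ((|y₀| : ℤ) : ℝ) := by exact_mod_cast h1
      _ = |(y₀:ℝ)| := by push_cast; ring
  have hub : X' < (q:ℝ) ^ 2 := by
    have h1 : (q:ℝ) ^ θ < (q:ℝ) ^ (2:ℝ) :=
      rpow_lt_rpow_of_exponent_lt (by linarith only [hq3]) hθ2
    have h2 : (q:ℝ) ^ (2:ℝ) = (q:ℝ) ^ 2 := by
      rw [show (2:ℝ) = ((2:ℕ):ℝ) by norm_num, rpow_natCast]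
    rw [← h2]; rw [hX'def]; exact h1
  linarith only [hylb, hub, hy0X]
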